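/- A linear fractional map φ(z) = (az+b)/(cz+d) with ad-bc ≠ 0 maps the open unit disk into itself if and only if |b·conj(d) - a·conj(c)| + |ad - bc| ≤ |d|² - |c|². -/

import Mathlib

open Complex

section LftAux
open ComplexConjugate

lemma lft_normSq_key (c d z : ℂ) :
    normSq (c*z+d) =
      normSq (conj d * z + conj c) + (normSq d - normSq c) * (1 - normSq z) := by
  have h : (c*z+d) * conj (c*z+d) =
      (conj d * z + conj c) * conj (conj d * z + conj c)
        + (d * conj d - c * conj c) * (1 - z * conj z) := by
    simp only [map_add, map_mul, Complex.conj_conj]; ring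
  rw [Complex.mul_conj, Complex.mul_conj, Complex.mul_conj, Complex.mul_conj,
    Complex.mul_conj] at h
  exact_mod_cast h

lemma lft_backward (a b c d : ℂ) (h : a * d - b * c ≠ 0)
    (hcrit : ‖b * conj d - a * conj c‖ + ‖a * d - b * c‖
        ≤ ‖d‖ ^ 2 - ‖c‖ ^ 2) :
    ∀ z : ℂ, ‖z‖ < 1 → ‖((a * z + b) / (c * z + d))‖ < 1 := by
  intro z hz
  set D : ℝ := ‖d‖ ^ 2 - ‖c‖ ^ 2 with hDdef
  have he : 0 < ‖a*d - b*c‖ := by simpa using norm_pos_iff.mpr h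
  have hD0 : 0 < D := lt_of_lt_of_le (by positivity) hcrit
  have hz2 : normSq z < 1 := by
    rw [← Complex.sq_norm]; nlinarith [norm_nonneg z]
  have hkey := lft_normSq_key c d z
  have hDnS : normSq d - normSq c = D := by rw [hDdef, Complex.sq_norm, Complex.sq_norm]
  rw [hDnS] at hkey
  have hlt : normSq (conj d * z + conj c) < normSq (c*z+d) := by
    nlinarith [normSq_nonneg (conj d * z + conj c)]
  have habslt : ‖conj d * z + conj c‖ < ‖c*z+d‖ := by
    rw [Complex.norm_def, Complex.norm_def]
    exact Real.sqrt_lt_sqrt (normSq_nonneg _) hlt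
  have hpos : 0 < normSq (c*z+d) := lt_of_le_of_lt (normSq_nonneg _) hlt
  have hne : c*z+d ≠ 0 := fun hh => by simp [hh] at hpos
  have habspos : 0 < ‖c*z+d‖ := by
    simpa using norm_pos_iff.mpr hne
  have hDC : ((D:ℝ):ℂ) = d * conj d - c * conj c := by
    rw [Complex.mul_conj, Complex.mul_conj, hDdef, Complex.sq_norm, Complex.sq_norm]
    push_cast; ring
  have hid : (a*z+b) * ((D:ℝ):ℂ) =
      (b * conj d - a * conj c) * (c*z+d) + (a*d - b*c) * (conj d * z + conj c) := by
    rw [hDC]; ring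
  have hmain : ‖a*z+b‖ * D < D * ‖c*z+d‖ := by
    have h1 : ‖a*z+b‖ * D = ‖((a*z+b) * ((D:ℝ):ℂ))‖ := by
      rw [norm_mul, Complex.norm_real, Real.norm_eq_abs, _root_.abs_of_nonneg hD0.le]
    rw [h1, hid]
    calc ‖((b * conj d - a * conj c) * (c*z+d) + (a*d - b*c) * (conj d * z + conj c))‖
        ≤ ‖b * conj d - a * conj c‖ * ‖c*z+d‖
            + ‖a*d - b*c‖ * ‖conj d * z + conj c‖ := by
          refine le_trans (norm_add_le _ _) ?_
          rw [norm_mul, norm_mul]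
      _ < ‖b * conj d - a * conj c‖ * ‖c*z+d‖
            + ‖a*d - b*c‖ * ‖c*z+d‖ := by
          have := mul_lt_mul_of_pos_left habslt he
          linarith
      _ ≤ D * ‖c*z+d‖ := by nlinarith
  have hfin : ‖a*z+b‖ < ‖c*z+d‖ := by
    have := (mul_lt_mul_iff_left₀ hD0).mp (by linarith [hmain] : ‖a*z+b‖ * D < ‖c*z+d‖ * D)
    exact this
  rw [norm_div, div_lt_one habspos]
  exact hfin

lemma lft_claimA (a b c d : ℂ) (h : a * d - b * c ≠ 0)
    (H : ∀ z : ℂ, ‖z‖ < 1 → ‖((a * z + b) / (c * z + d))‖ < 1) :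
    ∀ z : ℂ, ‖z‖ < 1 → c * z + d ≠ 0 ∧
      ‖a * z + b‖ < ‖c * z + d‖ := by
  intro z hz
  have hne : c * z + d ≠ 0 := by
    intro hzd
    have hc : c ≠ 0 := by
      intro hc0
      have hd0 : d = 0 := by simpa [hc0] using hzd
      exact h (by simp [hd0, hc0])
    have hab : a * z + b ≠ 0 := by
      intro hab0
      apply h
      have hd : d = -(c*z) := by linear_combination hzd
      have hb : b = -(a*z) := by linear_combination hab0
      rw [hd, hb]; ring
    have habpos : 0 < ‖a*z+b‖ := by simpa using norm_pos_iff.mpr hab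
    have hcpos : 0 < ‖c‖ := by simpa using norm_pos_iff.mpr hc
    set t : ℝ := min (‖a*z+b‖ / (‖a‖ + ‖c‖)) (1 - ‖z‖) / 2 with ht
    have hac : 0 < ‖a‖ + ‖c‖ := by positivity
    have ht0 : 0 < t := by
      apply div_pos _ (by norm_num)
      apply lt_min (div_pos habpos hac) (by linarith)
    have hz' : ‖(z + (t:ℂ))‖ < 1 := by
      calc ‖(z + (t:ℂ))‖ ≤ ‖z‖ + ‖(t:ℂ)‖ := norm_add_le _ _
        _ = ‖z‖ + t := by rw [Complex.norm_real, Real.norm_eq_abs, _root_.abs_of_nonneg ht0.le]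
        _ < 1 := by
            have : t ≤ (1 - ‖z‖)/2 := by
              rw [ht]; apply div_le_div_of_nonneg_right (min_le_right _ _) (by norm_num)
            linarith
    have hHz := H (z + (t:ℂ)) hz'
    -- compute
    have hden : c * (z + (t:ℂ)) + d = c * (t:ℂ) := by rw [mul_add]; linear_combination hzd
    have hnum : a * (z + (t:ℂ)) + b = (a*z+b) + a * (t:ℂ) := by ring
    have htb : t ≤ ‖a*z+b‖ / (‖a‖ + ‖c‖) / 2 := by
      rw [ht]; apply div_le_div_of_nonneg_right (min_le_left _ _) (by norm_num)
    have hlow : ‖(a * (z + (t:ℂ)) + b)‖ ≥ ‖a*z+b‖ - ‖a‖ * t := by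
      rw [hnum]
      calc ‖a*z+b‖ - ‖a‖ * t
          ≤ ‖a*z+b‖ - ‖(a * (t:ℂ))‖ := by
            rw [norm_mul, Complex.norm_real, Real.norm_eq_abs, _root_.abs_of_nonneg ht0.le]
        _ ≤ ‖((a*z+b) + a*(t:ℂ))‖ := by
            have h2 := norm_add_le ((a*z+b) + a*(t:ℂ)) (-(a*(t:ℂ)))
            rw [norm_neg, add_neg_cancel_right] at h2
            linarith
    have hgt : ‖(a * (z + (t:ℂ)) + b)‖ > ‖(c * (z + (t:ℂ)) + d)‖ := by
      rw [hden, norm_mul, Complex.norm_real, Real.norm_eq_abs, _root_.abs_of_nonneg ht0.le]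
      have hkey : (‖a‖ + ‖c‖) * t < ‖a*z+b‖ := by
        have := mul_le_mul_of_nonneg_left htb hac.le
        calc (‖a‖ + ‖c‖) * t
            ≤ (‖a‖ + ‖c‖) * (‖a*z+b‖ / (‖a‖ + ‖c‖) / 2) := this
          _ = ‖a*z+b‖ / 2 := by field_simp
          _ < ‖a*z+b‖ := by linarith
      nlinarith [hlow]
    rw [norm_div, hden, norm_mul, Complex.norm_real, Real.norm_eq_abs, _root_.abs_of_nonneg ht0.le,
      div_lt_one (by positivity)] at hHz
    rw [hden, norm_mul, Complex.norm_real, Real.norm_eq_abs, _root_.abs_of_nonneg ht0.le] at hgt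
    linarith
  refine ⟨hne, ?_⟩
  have := H z hz
  rwa [norm_div, div_lt_one (by simpa using norm_pos_iff.mpr hne)] at this

lemma lft_claimB (a b c d : ℂ) (h : a * d - b * c ≠ 0)
    (A : ∀ z : ℂ, ‖z‖ < 1 → c * z + d ≠ 0 ∧
      ‖a * z + b‖ < ‖c * z + d‖) :
    ‖c‖ < ‖d‖ := by
  have hA0 := A 0 (by simp)
  simp only [mul_zero, zero_add] at hA0
  have hd : d ≠ 0 := hA0.1
  have hdpos : 0 < ‖d‖ := by simpa using norm_pos_iff.mpr hd
  rcases eq_or_ne c 0 with hc | hc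
  · simpa [hc] using hdpos
  have hcpos : 0 < ‖c‖ := by simpa using norm_pos_iff.mpr hc
  by_contra hle
  push_neg at hle   -- abs d ≤ abs c
  rcases lt_or_eq_of_le hle with hlt | heq
  · have hz : ‖(-(d/c))‖ < 1 := by
      rw [norm_neg, norm_div, div_lt_one hcpos]; exact hlt
    have := (A _ hz).1
    apply this
    field_simp
    ring
  · have he : 0 < ‖a*d - b*c‖ := by simpa using norm_pos_iff.mpr h
    set K : ℝ := ‖d‖ * ‖c‖ + ‖a*d‖ with hK
    have hK0 : 0 < K := by positivity
    set s : ℝ := min (‖a*d - b*c‖ / K) 1 / 2 with hs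
    have hs0 : 0 < s := by
      apply div_pos _ (by norm_num)
      exact lt_min (div_pos he hK0) one_pos
    have hs1 : s < 1 := by
      have : min (‖a*d - b*c‖ / K) 1 ≤ 1 := min_le_right _ _
      rw [hs]; linarith
    have hsK : s * K < ‖a*d - b*c‖ := by
      have h1 : s ≤ ‖a*d - b*c‖ / K / 2 := by
        rw [hs]
        exact div_le_div_of_nonneg_right (min_le_left _ _) (by norm_num)
      have h2 : s * K ≤ ‖a*d - b*c‖ / 2 := by
        calc s * K ≤ (‖a*d - b*c‖ / K / 2) * K :=
              mul_le_mul_of_nonneg_right h1 hK0.le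
          _ = ‖a*d - b*c‖ / 2 := by field_simp
      exact lt_of_le_of_lt h2 (by linarith)
    set z : ℂ := -((1 - (s:ℂ)) * (d / c)) with hzdef
    have habs1s : ‖(1 - (s:ℂ))‖ = 1 - s := by
      have : (1 - (s:ℂ)) = (((1 - s : ℝ)):ℂ) := by push_cast; ring
      rw [this, Complex.norm_real, Real.norm_eq_abs, _root_.abs_of_nonneg (by linarith)]
    have hzabs : ‖z‖ < 1 := by
      rw [hzdef, norm_neg, norm_mul, norm_div, ← heq, div_self (ne_of_gt hdpos),
        mul_one, habs1s]
      linarith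
    obtain ⟨hzne, hzlt⟩ := A z hzabs
    have hden : c * z + d = (s:ℂ) * d := by
      rw [hzdef]
      field_simp
      ring
    have hnum : c * (a * z + b) = (b*c - a*d) + (s:ℂ) * (a*d) := by
      rw [hzdef]
      field_simp
      ring
    rw [hden] at hzlt
    have h3 : ‖(c * (a*z+b))‖ < ‖c‖ * (s * ‖d‖) := by
      rw [norm_mul]
      have : ‖((s:ℂ) * d)‖ = s * ‖d‖ := by
        rw [norm_mul, Complex.norm_real, Real.norm_eq_abs, _root_.abs_of_nonneg hs0.le]
      rw [this] at hzlt
      exact (mul_lt_mul_iff_right₀ hcpos).mpr hzlt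
    have h4 : ‖a*d - b*c‖ ≤ ‖(c*(a*z+b))‖ + s * ‖a*d‖ := by
      have : a*d - b*c = (s:ℂ)*(a*d) - c*(a*z+b) := by rw [hnum]; ring
      rw [this]
      calc ‖((s:ℂ)*(a*d) - c*(a*z+b))‖
          ≤ ‖((s:ℂ)*(a*d))‖ + ‖(c*(a*z+b))‖ := by
            have := norm_add_le ((s:ℂ)*(a*d)) (-(c*(a*z+b)))
            simpa [sub_eq_add_neg] using this
        _ = s * ‖a*d‖ + ‖(c*(a*z+b))‖ := by
            rw [norm_mul, Complex.norm_real, Real.norm_eq_abs, _root_.abs_of_nonneg hs0.le]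
        _ = ‖(c*(a*z+b))‖ + s * ‖a*d‖ := by ring
    have : ‖a*d - b*c‖ < s * K := by
      rw [hK]
      calc ‖a*d-b*c‖ ≤ ‖(c*(a*z+b))‖ + s * ‖a*d‖ := h4
        _ < ‖c‖ * (s * ‖d‖) + s * ‖a*d‖ := by linarith
        _ = s * (‖d‖ * ‖c‖ + ‖a*d‖) := by ring
    linarith

lemma lft_claimC (a b c d : ℂ)
    (A : ∀ z : ℂ, ‖z‖ < 1 → c * z + d ≠ 0 ∧
      ‖a * z + b‖ < ‖c * z + d‖) :
    ∀ z : ℂ, ‖z‖ = 1 → ‖a * z + b‖ ≤ ‖c * z + d‖ := by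
  intro z hz
  apply le_of_forall_pos_le_add
  intro ε hε
  set M : ℝ := ‖a‖ + ‖c‖ with hM
  have hM0 : 0 ≤ M := by positivity
  set s : ℝ := min ε 1 / (M + 2) with hs
  have hs0 : 0 < s := div_pos (lt_min hε one_pos) (by linarith)
  have hs1 : s < 1 := by
    rw [hs, div_lt_one (by linarith)]
    have := min_le_right ε 1
    linarith
  have hsM : s * M ≤ ε := by
    have h1 : s * (M + 2) = min ε 1 := by rw [hs]; field_simp
    have h2 : s * M ≤ s * (M+2) := by nlinarith
    have := min_le_left ε 1
    linarith
  have hzs : ‖(((1 - s : ℝ)):ℂ)‖ * ‖z‖ < 1 := by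
    rw [hz, mul_one, Complex.norm_real, Real.norm_eq_abs, _root_.abs_of_nonneg (by linarith)]
    linarith
  obtain ⟨_, hlt⟩ := A ((((1-s:ℝ)):ℂ) * z) (by rw [norm_mul] at *; exact hzs)
  have e1 : ‖a*z+b‖ ≤ ‖(a * ((((1-s:ℝ)):ℂ)*z) + b)‖ + s * ‖a‖ := by
    have heq : a*z+b = (a * ((((1-s:ℝ)):ℂ)*z) + b) + ((s:ℝ):ℂ) * (a * z) := by push_cast; ring
    calc ‖a*z+b‖ = ‖((a * ((((1-s:ℝ)):ℂ)*z) + b) + ((s:ℝ):ℂ) * (a*z))‖ := by rw [← heq]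
      _ ≤ ‖(a * ((((1-s:ℝ)):ℂ)*z) + b)‖ + ‖(((s:ℝ):ℂ) * (a*z))‖ := norm_add_le _ _
      _ ≤ ‖(a * ((((1-s:ℝ)):ℂ)*z) + b)‖ + s * ‖a‖ := by
          rw [norm_mul, norm_mul, Complex.norm_real, Real.norm_eq_abs, _root_.abs_of_nonneg hs0.le, hz, mul_one]
  have e2 : ‖(c * ((((1-s:ℝ)):ℂ)*z) + d)‖ ≤ ‖c*z+d‖ + s * ‖c‖ := by
    have heq : c * ((((1-s:ℝ)):ℂ)*z) + d = (c*z+d) + (-(((s:ℝ):ℂ) * (c * z))) := by push_cast; ring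
    calc ‖(c * ((((1-s:ℝ)):ℂ)*z) + d)‖
        = ‖((c*z+d) + (-(((s:ℝ):ℂ) * (c*z))))‖ := by rw [← heq]
      _ ≤ ‖c*z+d‖ + ‖(-(((s:ℝ):ℂ) * (c*z)))‖ := norm_add_le _ _
      _ ≤ ‖c*z+d‖ + s * ‖c‖ := by
          rw [norm_neg, norm_mul, norm_mul, Complex.norm_real, Real.norm_eq_abs,
            _root_.abs_of_nonneg hs0.le, hz, mul_one]
  have : s * ‖a‖ + s * ‖c‖ = s * M := by rw [hM]; ring
  linarith

lemma lft_forward_final (a b c d : ℂ) (h : a * d - b * c ≠ 0)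
    (hcd : ‖c‖ < ‖d‖)
    (C : ∀ z : ℂ, ‖z‖ = 1 →
      ‖a * z + b‖ ≤ ‖c * z + d‖) :
    ‖b * conj d - a * conj c‖ + ‖a * d - b * c‖
      ≤ ‖d‖ ^ 2 - ‖c‖ ^ 2 := by
  set g : ℂ := b * conj d - a * conj c with hg
  set e : ℂ := a * d - b * c with hedef
  set E : ℂ := ((‖e‖ : ℝ) : ℂ) with hE
  have heabs : 0 < ‖e‖ := by simpa using norm_pos_iff.mpr h
  have hEne : E ≠ 0 := by
    rw [hE]; exact_mod_cast Complex.ofReal_ne_zero.mpr (ne_of_gt heabs)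
  set w : ℂ := if hg0 : g = 0 then 1 else g / ((‖g‖ : ℝ) : ℂ) with hw
  have hwabs : ‖w‖ = 1 := by
    rw [hw]
    split_ifs with hg0
    · simp
    · rw [norm_div, Complex.norm_real, Real.norm_eq_abs, _root_.abs_of_nonneg (norm_nonneg g),
        div_self (by simpa using norm_pos_iff.mpr hg0)]
  have hgw : g = ((‖g‖ : ℝ) : ℂ) * w := by
    rw [hw]
    split_ifs with hg0
    · simp [hg0]
    · rw [mul_div_cancel₀]
      exact Complex.ofReal_ne_zero.mpr (norm_ne_zero_iff.mpr hg0)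
  have hwconj : w * conj w = 1 := by
    rw [Complex.mul_conj]
    rw [← Complex.sq_norm, hwabs]
    norm_num
  have heconj : e * conj e = E * E := by
    rw [Complex.mul_conj, hE, ← Complex.sq_norm]
    push_cast; ring
  have hEconj : conj E = E := Complex.conj_ofReal _
  set M : ℂ := e * conj d - w * E * c with hM
  set N : ℂ := w * E * d - e * conj c with hN
  have hMne : M ≠ 0 := by
    intro hM0
    have : e * conj d = w * E * c := by rw [hM] at hM0; linear_combination hM0
    have h1 : ‖e‖ * ‖d‖ = ‖e‖ * ‖c‖ := by
      have := congrArg (‖·‖) this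
      simpa [norm_mul, hwabs, hE, Complex.norm_real, Real.norm_eq_abs,
        _root_.abs_of_nonneg (norm_nonneg e), Complex.norm_conj] using this
    have := mul_left_cancel₀ (ne_of_gt heabs) h1
    linarith
  have hNM : N * conj N = M * conj M := by
    simp only [hN, hM, map_sub, map_mul, hEconj, Complex.conj_conj]
    linear_combination (d * conj d - c * conj c) * ((E*E) * hwconj - heconj)
  set z : ℂ := N / M with hz
  have hzabs : ‖z‖ = 1 := by
    have hnn : normSq N = normSq M := by
      have h1 := Complex.mul_conj N
      have h2 := Complex.mul_conj M
      rw [h1, h2] at hNM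
      exact_mod_cast hNM
    rw [hz, norm_div, Complex.norm_def, Complex.norm_def, hnn,
      div_self (by
        intro h0
        exact hMne (by
          have : normSq M = 0 := by
            have := Real.sqrt_eq_zero (normSq_nonneg M) |>.mp h0
            exact this
          exact normSq_eq_zero.mp this))]
  -- key rotation property
  have hrot : e * (conj d * z + conj c) = w * E * (c * z + d) := by
    rw [hz]
    field_simp
    rw [hN, hM]
    ring
  -- boundary inequality at z
  have hC := C z hzabs
  have hSpos : 0 < ‖c * z + d‖ := by
    have h1 : ‖c * z‖ = ‖c‖ := by rw [norm_mul, hzabs, mul_one]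
    have h2 := norm_add_le (c*z+d) (-(c*z))
    have h3 : c*z+d + -(c*z) = d := by ring
    rw [norm_neg, h3, h1] at h2
    linarith
  -- D as complex
  set D : ℝ := ‖d‖ ^ 2 - ‖c‖ ^ 2 with hD
  have hD0 : 0 < D := by
    rw [hD]
    have := norm_nonneg c
    nlinarith
  have hDC : ((D:ℝ):ℂ) = d * conj d - c * conj c := by
    rw [Complex.mul_conj, Complex.mul_conj, hD, Complex.sq_norm, Complex.sq_norm]
    push_cast; ring
  have hid : (a*z+b) * ((D:ℝ):ℂ) = g * (c*z+d) + e * (conj d * z + conj c) := by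
    rw [hDC, hg, hedef]; ring
  have hcomb : g * (c*z+d) + e * (conj d * z + conj c)
      = (((‖g‖ : ℝ):ℂ) + E) * w * (c*z+d) := by
    linear_combination hrot + (c*z+d) * hgw
  have habs : ‖a*z+b‖ * D
      = (‖g‖ + ‖e‖) * ‖c*z+d‖ := by
    have h1 : ‖a*z+b‖ * D = ‖((a*z+b) * ((D:ℝ):ℂ))‖ := by
      rw [norm_mul, Complex.norm_real, Real.norm_eq_abs, _root_.abs_of_nonneg hD0.le]
    rw [h1, hid, hcomb, norm_mul, norm_mul, hwabs, mul_one]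
    congr 1
    have : (((‖g‖ : ℝ):ℂ) + E) = (((‖g‖ + ‖e‖ : ℝ)):ℂ) := by
      rw [hE]; push_cast; ring
    rw [this, Complex.norm_real, Real.norm_eq_abs, _root_.abs_of_nonneg (by positivity)]
  have hfin : (‖g‖ + ‖e‖) * ‖c*z+d‖
      ≤ D * ‖c*z+d‖ := by
    rw [← habs]
    have := mul_le_mul_of_nonneg_right hC hD0.le
    nlinarith
  have := (mul_le_mul_iff_left₀ hSpos).mp hfin
  linarith
end LftAux

theorem lft_self_map_criterion (a b c d : ℂ) (h : a * d - b * c ≠ 0) :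
    (∀ z : ℂ, ‖z‖ < 1 → ‖((a * z + b) / (c * z + d))‖ < 1) ↔
      ‖(b * (starRingEnd ℂ) d - a * (starRingEnd ℂ) c)‖ +
        ‖a * d - b * c‖ ≤ ‖d‖ ^ 2 - ‖c‖ ^ 2 := by
  constructor
  · intro H
    have A := lft_claimA a b c d h H
    have B := lft_claimB a b c d h A
    have C := lft_claimC a b c d A
    exact lft_forward_final a b c d h B C
  · exact lft_backward a b c d h
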